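/- (Key coercivity inequality in the proof of Lemma 6.) Let (Ω, μ) be a measure space, let S > 0, M ≥ 0, and let k > 0 satisfy 8·S·M²·k ≤ 1. Let u, E, B⁻ : Ω → ℝ³ be strongly measurable with ∫_Ω ‖u(x)‖² dμ < ∞, ∫_Ω ‖E(x)‖² dμ < ∞, and ‖B⁻(x)‖ ≤ M for μ-almost every x. Then k⁻¹ ∫_Ω ‖u(x)‖² dμ + S ∫_Ω ‖E(x) + u(x) × B⁻(x)‖² dμ ≥ min(1/2, S/2) · ( k⁻¹ ∫_Ω ‖u(x)‖² dμ + ∫_Ω ‖E(x)‖² dμ ). -/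

import Mathlib

open MeasureTheory RealInnerProductSpace

noncomputable section

/-- `ℝ³` as Euclidean space. -/
abbrev E3 := EuclideanSpace ℝ (Fin 3)

/-- Partial derivative of `F` at `x` in the `i`-th coordinate direction. -/
def pd (i : Fin 3) (F : E3 → E3) (x : E3) : E3 :=
  fderiv ℝ F x (EuclideanSpace.single i 1)

/-- Divergence of a vector field on `ℝ³`. -/
def div3 (F : E3 → E3) (x : E3) : ℝ := ∑ i, pd i F x i

/-- Curl of a vector field on `ℝ³`. -/
def curl3 (F : E3 → E3) (x : E3) : E3 :=
  (WithLp.equiv 2 (Fin 3 → ℝ)).symm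
    ![pd 1 F x 2 - pd 2 F x 1,
      pd 2 F x 0 - pd 0 F x 2,
      pd 0 F x 1 - pd 1 F x 0]

/-- Cross product on `ℝ³`. -/
def cross3 (u v : E3) : E3 :=
  (WithLp.equiv 2 (Fin 3 → ℝ)).symm
    (crossProduct ((WithLp.equiv 2 (Fin 3 → ℝ)) u) ((WithLp.equiv 2 (Fin 3 → ℝ)) v))

/-- Gradient of a scalar function on `ℝ³` (vector of partial derivatives). -/
def grad3 (p : E3 → ℝ) (x : E3) : E3 :=
  (WithLp.equiv 2 (Fin 3 → ℝ)).symm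
    ![fderiv ℝ p x (EuclideanSpace.single 0 1),
      fderiv ℝ p x (EuclideanSpace.single 1 1),
      fderiv ℝ p x (EuclideanSpace.single 2 1)]

/-- Componentwise Laplacian of a vector field on `ℝ³`. -/
def lap3 (u : E3 → E3) (x : E3) : E3 :=
  ∑ j, fderiv ℝ (fun y => fderiv ℝ u y (EuclideanSpace.single j 1)) x
        (EuclideanSpace.single j 1)

/-- Squared Frobenius norm of the Jacobian of `u` at `x`. -/
def gradNormSq (u : E3 → E3) (x : E3) : ℝ :=
  ∑ i, ∑ j, (fderiv ℝ u x (EuclideanSpace.single j 1) i) ^ 2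


lemma norm_cross3_le (u v : E3) : ‖cross3 u v‖ ≤ ‖u‖ * ‖v‖ := by
  have h1 : ‖cross3 u v‖ ^ 2 ≤ (‖u‖ * ‖v‖) ^ 2 := by
    rw [mul_pow]
    simp only [EuclideanSpace.norm_eq]
    rw [Real.sq_sqrt (by positivity), Real.sq_sqrt (by positivity), Real.sq_sqrt (by positivity)]
    simp only [cross3, crossProduct, Fin.sum_univ_three, Real.norm_eq_abs, sq_abs,
      WithLp.equiv_symm_apply, WithLp.equiv_apply, WithLp.ofLp_toLp, Matrix.cons_val_zero,
      Matrix.cons_val_one, Matrix.head_cons, LinearMap.mk₂_apply, Matrix.cons_val_two,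
      Matrix.tail_cons, Equiv.coe_refl, id_eq]
    nlinarith [sq_nonneg (u 0 * v 0 + u 1 * v 1 + u 2 * v 2)]
  have h2 := Real.sqrt_le_sqrt h1
  rwa [Real.sqrt_sq (norm_nonneg _), Real.sqrt_sq (by positivity)] at h2

lemma cont_cross3 : Continuous (fun p : E3 × E3 => cross3 p.1 p.2) := by
  unfold cross3
  apply (PiLp.continuousLinearEquiv 2 ℝ (fun _ : Fin 3 => ℝ)).symm.continuous.comp
  apply continuous_pi
  intro i
  have c0 : ∀ j : Fin 3, Continuous fun p : E3 × E3 => p.1 j :=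
    fun j => (EuclideanSpace.proj j).continuous.comp continuous_fst
  have c1 : ∀ j : Fin 3, Continuous fun p : E3 × E3 => p.2 j :=
    fun j => (EuclideanSpace.proj j).continuous.comp continuous_snd
  fin_cases i <;>
    simp only [crossProduct, LinearMap.mk₂_apply, WithLp.equiv, Equiv.refl_apply,
      Fin.zero_eta, Fin.mk_one, Matrix.cons_val_zero, Matrix.cons_val_one, Matrix.head_cons,
      Matrix.cons_val_two, Matrix.tail_cons, Fin.isValue] <;>
    exact ((c0 _).mul (c1 _)).sub ((c0 _).mul (c1 _))

/-- key coercivity inequality in the proof of Lemma 6: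
for `8·S·M²·k ≤ 1`,
`k⁻¹∫‖u‖² + S∫‖E + u × B⁻‖² ≥ min(1/2, S/2)·(k⁻¹∫‖u‖² + ∫‖E‖²)`. -/
theorem picard_coercivity
    {Ω : Type*} [MeasurableSpace Ω] (μ : Measure Ω)
    (S M k : ℝ) (hS : 0 < S) (hM : 0 ≤ M) (hk : 0 < k)
    (hkM : 8 * S * M ^ 2 * k ≤ 1)
    (u E Bm : Ω → E3)
    (hu : AEStronglyMeasurable u μ) (hE : AEStronglyMeasurable E μ)
    (hBm : AEStronglyMeasurable Bm μ)
    (hu2 : Integrable (fun x => ‖u x‖ ^ 2) μ)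
    (hE2 : Integrable (fun x => ‖E x‖ ^ 2) μ)
    (hBbound : ∀ᵐ x ∂μ, ‖Bm x‖ ≤ M) :
    min (1 / 2) (S / 2) *
        (k⁻¹ * (∫ x, ‖u x‖ ^ 2 ∂μ) + ∫ x, ‖E x‖ ^ 2 ∂μ) ≤
      k⁻¹ * (∫ x, ‖u x‖ ^ 2 ∂μ) +
        S * ∫ x, ‖E x + cross3 (u x) (Bm x)‖ ^ 2 ∂μ := by
  
  have hcb : ∀ᵐ x ∂μ, ‖cross3 (u x) (Bm x)‖ ≤ M * ‖u x‖ := by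
    filter_upwards [hBbound] with x hx
    calc ‖cross3 (u x) (Bm x)‖ ≤ ‖u x‖ * ‖Bm x‖ := norm_cross3_le _ _
      _ ≤ M * ‖u x‖ := by nlinarith [norm_nonneg (u x)]
  have h0 : AEStronglyMeasurable (fun x => (u x, Bm x)) μ := hu.prodMk hBm
  have h1 := cont_cross3.comp_aestronglyMeasurable h0
  have hmeas : AEStronglyMeasurable (fun x => E x + cross3 (u x) (Bm x)) μ := hE.add h1
  have hI : Integrable (fun x => ‖E x + cross3 (u x) (Bm x)‖ ^ 2) μ := by
    apply Integrable.mono' ((hE2.const_mul 2).add (hu2.const_mul (2 * M ^ 2)))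
      ((hmeas.norm).pow 2)
    filter_upwards [hcb] with x hx
    simp only [Pi.add_apply, Pi.pow_apply]
    have h1 : ‖E x + cross3 (u x) (Bm x)‖ ≤ ‖E x‖ + ‖cross3 (u x) (Bm x)‖ := norm_add_le _ _
    have h2 : (0:ℝ) ≤ ‖E x + cross3 (u x) (Bm x)‖ := norm_nonneg _
    have h3 : (0:ℝ) ≤ ‖cross3 (u x) (Bm x)‖ := norm_nonneg _
    rw [Real.norm_eq_abs, abs_of_nonneg (by positivity)]
    nlinarith [mul_self_le_mul_self h2 h1, mul_self_le_mul_self h3 hx,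
      sq_nonneg (‖E x‖ - ‖cross3 (u x) (Bm x)‖), norm_nonneg (E x), norm_nonneg (u x)]
  have hlow : ∫ x, (1/2 * ‖E x‖ ^ 2 - M ^ 2 * ‖u x‖ ^ 2) ∂μ ≤
      ∫ x, ‖E x + cross3 (u x) (Bm x)‖ ^ 2 ∂μ := by
    apply integral_mono_ae ((hE2.const_mul (1/2)).sub (hu2.const_mul (M ^ 2))) hI
    filter_upwards [hcb] with x hx
    simp only [Pi.sub_apply]
    have h1 : ‖E x‖ ≤ ‖E x + cross3 (u x) (Bm x)‖ + ‖cross3 (u x) (Bm x)‖ := by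
      calc ‖E x‖ = ‖(E x + cross3 (u x) (Bm x)) - cross3 (u x) (Bm x)‖ := by rw [add_sub_cancel_right]
        _ ≤ _ := norm_sub_le _ _
    nlinarith [mul_self_le_mul_self (norm_nonneg (E x)) h1,
      mul_self_le_mul_self (norm_nonneg (cross3 (u x) (Bm x))) hx,
      sq_nonneg (‖E x + cross3 (u x) (Bm x)‖ - ‖cross3 (u x) (Bm x)‖),
      norm_nonneg (E x), norm_nonneg (u x), norm_nonneg (E x + cross3 (u x) (Bm x)),
      norm_nonneg (cross3 (u x) (Bm x))]
  rw [integral_sub (hE2.const_mul (1/2)) (hu2.const_mul (M ^ 2)), integral_const_mul,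
    integral_const_mul] at hlow
  set A := ∫ x, ‖u x‖ ^ 2 ∂μ with hA
  set B := ∫ x, ‖E x‖ ^ 2 ∂μ with hB
  set C := ∫ x, ‖E x + cross3 (u x) (Bm x)‖ ^ 2 ∂μ with hC
  have hA0 : 0 ≤ A := integral_nonneg fun x => by positivity
  have hB0 : 0 ≤ B := integral_nonneg fun x => by positivity
  have hmin1 : min (1/2) (S/2) ≤ 1/2 := min_le_left _ _
  have hmin2 : min (1/2) (S/2) ≤ S/2 := min_le_right _ _
  have hkinv : (0:ℝ) < k⁻¹ := by positivity
  have hSM : S * M ^ 2 * A ≤ k⁻¹ * A / 8 := by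
    rw [inv_mul_eq_div, div_div, le_div_iff₀ (by positivity)]
    nlinarith [mul_nonneg hA0 (sub_nonneg.2 hkM)]
  calc min (1/2) (S/2) * (k⁻¹ * A + B)
      ≤ 1/2 * (k⁻¹ * A) + S/2 * B := by
        rw [mul_add]
        gcongr <;> positivity
    _ ≤ k⁻¹ * A + S * (1/2 * B - M ^ 2 * A) := by nlinarith
    _ ≤ k⁻¹ * A + S * C := by nlinarith
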